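/- Let K, D ∈ ℕ with K, D ≥ 1, let f : [0,1]^K → [0,1] be measurable, and let ε ∈ (0,1). Define B_{i,j} = ∫_{[0,1]^K} f(x)^{i+j} dx − (∫_{[0,1]^K} f(x)^i dx)(∫_{[0,1]^K} f(x)^j dx), [A_k]_{i,j} = ∫₀¹ F_{i,k}(t) F_{j,k}(t) dt − (∫_{[0,1]^K} f(x)^i dx)(∫_{[0,1]^K} f(x)^j dx) with F_{i,k}(t) = ∫_{[0,1]^{K−1}} f(x₁,…,x_{k−1}, t, x_{k+1},…,x_K)^i dx_{−k}, and A = Σ_{k=1}^K A_k. Assume B is positive definite and Z \ {0} is nonempty, where Z = {z ∈ ℝ^D : Mz ≥ 0 componentwise}. Then the following are equivalent: (i) there exist z ∈ Z \ {0} and c ∈ ℝ such that the skewed function φ_{z,c}(x) = Σ_{d=1}^D z_d f(x)^d + c satisfies Σ_{k=1}^K σ_k²(φ_{z,c}) ≥ (1−ε)·σ²(φ_{z,c}), i.e., φ_{z,c} is of effective superposition dimension 1 at level ε; (ii) max_{z ∈ Z \ {0}} (zᵀ A z)/(zᵀ B z) ≥ 1 − ε. -/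

import Mathlib

open MeasureTheory Matrix Finset

/-- The lower-triangular matrix `M̃` with entries
`[M̃]_{i,j} = C(i-1, j-1) / C(D-1, j-1)` (here `0`-indexed: `C(i,j)/C(D-1,j)`). -/
noncomputable def Mtilde (D : ℕ) : Matrix (Fin D) (Fin D) ℝ :=
  Matrix.of fun i j : Fin D =>
    if (j : ℕ) ≤ (i : ℕ) then
      ((i : ℕ).choose (j : ℕ) : ℝ) / ((D - 1).choose (j : ℕ) : ℝ)
    else 0

/-- `M = M̃ ⬝ diag(1, 2, …, D)`. -/
noncomputable def Mmat (D : ℕ) : Matrix (Fin D) (Fin D) ℝ :=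
  Mtilde D * Matrix.diagonal fun d : Fin D => ((d : ℕ) : ℝ) + 1

/-- The unit cube `[0,1]^K`. -/
def box (K : ℕ) : Set (Fin K → ℝ) := Set.univ.pi fun _ => Set.Icc (0 : ℝ) 1

/-- The marginal of `h` in the `k`-th variable:
`t ↦ ∫_{[0,1]^{K-1}} h(x₁,…,x_{k-1}, t, x_{k+1},…,x_K) dx_{−k}`. -/
noncomputable def marg (K : ℕ) (h : (Fin K → ℝ) → ℝ) (k : Fin K) (t : ℝ) : ℝ :=
  ∫ x in box K, h (Function.update x k t)

/-- Total variance `σ²(h) = ∫_{[0,1]^K} h(x)² dx − (∫_{[0,1]^K} h(x) dx)²`. -/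
noncomputable def totalVar (K : ℕ) (h : (Fin K → ℝ) → ℝ) : ℝ :=
  (∫ x in box K, (h x) ^ 2) - (∫ x in box K, h x) ^ 2

/-- First-order ANOVA variance
`σ_k²(h) = ∫₀¹ (marginal of h at t − ∫ h)² dt`. -/
noncomputable def firstVar (K : ℕ) (h : (Fin K → ℝ) → ℝ) (k : Fin K) : ℝ :=
  ∫ t in Set.Icc (0 : ℝ) 1, (marg K h k t - ∫ x in box K, h x) ^ 2

noncomputable def nuI : Measure ℝ := volume.restrict (Set.Icc (0:ℝ) 1)

instance : IsProbabilityMeasure nuI :=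
  ⟨by simp [nuI, Real.volume_Icc]⟩

lemma box_meas (K : ℕ) : MeasurableSet (box K) :=
  MeasurableSet.univ_pi fun _ => measurableSet_Icc

lemma restrict_box (K : ℕ) :
    (volume : Measure (Fin K → ℝ)).restrict (box K) = Measure.pi fun _ => nuI := by
  refine (Measure.pi_eq (μ := fun _ => nuI) fun s hs => ?_).symm
  rw [Measure.restrict_apply (MeasurableSet.univ_pi hs)]
  rw [show Set.univ.pi s ∩ box K = Set.univ.pi fun i => s i ∩ Set.Icc 0 1 from
    (Set.pi_inter_distrib).symm]
  rw [volume_pi, Measure.pi_pi]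
  exact Finset.prod_congr rfl fun i _ => (Measure.restrict_apply (hs i)).symm

lemma meas_Phi {K : ℕ} (k : Fin K) :
    Measurable (fun p : ℝ × (Fin K → ℝ) => Function.update p.2 k p.1) :=
  measurable_update'.comp (measurable_snd.prodMk measurable_fst)

lemma map_update {K : ℕ} (k : Fin K) :
    Measure.map (fun p : ℝ × (Fin K → ℝ) => Function.update p.2 k p.1)
      (nuI.prod (Measure.pi fun _ => nuI)) = Measure.pi fun _ => nuI := by
  refine (Measure.pi_eq (μ := fun _ => nuI) fun s hs => ?_).symm
  rw [Measure.map_apply (meas_Phi k) (MeasurableSet.univ_pi hs)]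
  have hpre : (fun p : ℝ × (Fin K → ℝ) => Function.update p.2 k p.1) ⁻¹' (Set.univ.pi s)
      = (s k) ×ˢ (Set.univ.pi fun j => if j = k then Set.univ else s j) := by
    ext p
    simp only [Set.mem_preimage, Set.mem_pi, Set.mem_univ, forall_true_left, Set.mem_prod,
      Function.update_apply]
    constructor
    · intro h
      refine ⟨by simpa using h k, fun j => ?_⟩
      by_cases hj : j = k
      · simp [hj]
      · simpa [hj] using h j
    · intro ⟨h1, h2⟩ j
      by_cases hj : j = k
      · simpa [hj] using h1
      · simpa [hj] using h2 j
  rw [hpre, Measure.prod_prod, Measure.pi_pi]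
  have h1 : (∏ j : Fin K, nuI (if j = k then Set.univ else s j))
      = ∏ j ∈ Finset.univ.erase k, nuI (s j) := by
    rw [← Finset.mul_prod_erase Finset.univ _ (Finset.mem_univ k)]
    rw [if_pos rfl, measure_univ, one_mul]
    exact Finset.prod_congr rfl fun j hj => by
      rw [if_neg (Finset.ne_of_mem_erase hj)]
  rw [h1, ← Finset.mul_prod_erase Finset.univ _ (Finset.mem_univ k)]

noncomputable def muK (K : ℕ) : Measure (Fin K → ℝ) := Measure.pi fun _ => nuI

instance (K : ℕ) : IsProbabilityMeasure (muK K) := by unfold muK; infer_instance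

lemma integrable_bdd {α : Type*} [MeasurableSpace α] {μ : Measure α} [IsFiniteMeasure μ]
    {g : α → ℝ} (hg : Measurable g) {C : ℝ} (h : ∀ x, |g x| ≤ C) : Integrable g μ :=
  (integrable_const C).mono' hg.aestronglyMeasurable (ae_of_all _ h)

lemma integral_abs_le {α : Type*} [MeasurableSpace α] {μ : Measure α} [IsProbabilityMeasure μ]
    {g : α → ℝ} {C : ℝ} (h : ∀ x, |g x| ≤ C) : |∫ x, g x ∂μ| ≤ C := by
  have := norm_integral_le_of_norm_le_const (μ := μ) (f := g) (C := C) (ae_of_all _ h)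
  simpa using this

lemma integral_marg_eq {K : ℕ} (k : Fin K) {g : (Fin K → ℝ) → ℝ} (hg : Measurable g)
    {C : ℝ} (hb : ∀ x, |g x| ≤ C) :
    (∫ t, (∫ x, g (Function.update x k t) ∂muK K) ∂nuI) = ∫ x, g x ∂muK K := by
  have hΦ := meas_Phi (K := K) k
  have hint : Integrable (fun p : ℝ × (Fin K → ℝ) => g (Function.update p.2 k p.1))
      (nuI.prod (muK K)) := integrable_bdd (hg.comp hΦ) (fun p => hb _)
  calc (∫ t, (∫ x, g (Function.update x k t) ∂muK K) ∂nuI)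
      = ∫ p, g (Function.update p.2 k p.1) ∂(nuI.prod (muK K)) := (integral_prod _ hint).symm
    _ = ∫ y, g y ∂(Measure.map (fun p : ℝ × (Fin K → ℝ) => Function.update p.2 k p.1)
          (nuI.prod (muK K))) := by
        have hmap : Measure.map (fun p : ℝ × (Fin K → ℝ) => Function.update p.2 k p.1)
            (nuI.prod (muK K)) = muK K := by unfold muK; exact map_update k
        rw [integral_map hΦ.aemeasurable (hmap ▸ hg.aestronglyMeasurable)]
    _ = ∫ x, g x ∂muK K := by
        have hmap : Measure.map (fun p : ℝ × (Fin K → ℝ) => Function.update p.2 k p.1)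
            (nuI.prod (muK K)) = muK K := by unfold muK; exact map_update k
        rw [hmap]

lemma marg_measurable {K : ℕ} (k : Fin K) {g : (Fin K → ℝ) → ℝ} (hg : Measurable g) :
    Measurable fun t => ∫ x, g (Function.update x k t) ∂muK K :=
  (StronglyMeasurable.integral_prod_right'
    (f := fun p : ℝ × (Fin K → ℝ) => g (Function.update p.2 k p.1))
    ((hg.comp (meas_Phi k)).stronglyMeasurable)).measurable

lemma restrict_box' (K : ℕ) :
    (volume : Measure (Fin K → ℝ)).restrict (box K) = muK K := restrict_box K

section core

variable {K D : ℕ} {f : (Fin K → ℝ) → ℝ}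

lemma hPb (hf01 : ∀ x, f x ∈ Set.Icc (0:ℝ) 1) (n : ℕ) (x : Fin K → ℝ) :
    |f x ^ n| ≤ 1 := by
  rcases hf01 x with ⟨h0, h1⟩
  rw [abs_of_nonneg (pow_nonneg h0 n)]
  exact pow_le_one₀ h0 h1

lemma int_h (hf : Measurable f) (hf01 : ∀ x, f x ∈ Set.Icc (0:ℝ) 1)
    (z : Fin D → ℝ) (c : ℝ) :
    ∫ x, ((∑ d : Fin D, z d * f x ^ ((d : ℕ) + 1)) + c) ∂muK K
      = (∑ d : Fin D, z d * ∫ x, f x ^ ((d : ℕ) + 1) ∂muK K) + c := by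
  have hPint : ∀ n : ℕ, Integrable (fun x => f x ^ n) (muK K) :=
    fun n => integrable_bdd (hf.pow_const n) (hPb hf01 n)
  rw [integral_add (integrable_finset_sum _ fun d _ => (hPint _).const_mul _)
    (integrable_const c), integral_finset_sum _ (fun d _ => (hPint _).const_mul _)]
  simp [integral_const_mul, measure_univ]

lemma tv_eq (hf : Measurable f) (hf01 : ∀ x, f x ∈ Set.Icc (0:ℝ) 1)
    (z : Fin D → ℝ) (c : ℝ) :
    totalVar K (fun x => (∑ d : Fin D, z d * f x ^ ((d : ℕ) + 1)) + c)
      = ∑ d : Fin D, ∑ e : Fin D, z d * z e *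
          ((∫ x in box K, f x ^ (((d : ℕ) + 1) + ((e : ℕ) + 1))) -
            (∫ x in box K, f x ^ ((d : ℕ) + 1)) * (∫ x in box K, f x ^ ((e : ℕ) + 1))) := by
  have hb := restrict_box' K
  simp only [totalVar, hb]
  have hPint : ∀ n : ℕ, Integrable (fun x => f x ^ n) (muK K) :=
    fun n => integrable_bdd (hf.pow_const n) (hPb hf01 n)
  set m : Fin D → ℝ := fun d => ∫ x, f x ^ ((d : ℕ) + 1) ∂muK K with hm
  set q : Fin D → Fin D → ℝ :=
    fun d e => ∫ x, f x ^ (((d : ℕ) + 1) + ((e : ℕ) + 1)) ∂muK K with hq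
  have hSint : Integrable (fun x => ∑ d : Fin D, z d * f x ^ ((d : ℕ) + 1)) (muK K) :=
    integrable_finset_sum _ fun d _ => (hPint _).const_mul _
  have E2 : ∫ x, ((∑ d : Fin D, z d * f x ^ ((d : ℕ) + 1)) + c) ∂muK K
      = (∑ d : Fin D, z d * m d) + c := int_h hf hf01 z c
  have hpt : ∀ x : Fin K → ℝ, ((∑ d : Fin D, z d * f x ^ ((d : ℕ) + 1)) + c) ^ 2
      = (∑ d : Fin D, ∑ e : Fin D, (z d * z e) * f x ^ (((d : ℕ) + 1) + ((e : ℕ) + 1)))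
        + ((2 * c) * (∑ d : Fin D, z d * f x ^ ((d : ℕ) + 1)) + c ^ 2) := by
    intro x
    have h1 : (∑ d : Fin D, z d * f x ^ ((d : ℕ) + 1)) * (∑ e : Fin D, z e * f x ^ ((e : ℕ) + 1))
        = ∑ d : Fin D, ∑ e : Fin D, (z d * z e) * f x ^ (((d : ℕ) + 1) + ((e : ℕ) + 1)) := by
      rw [Finset.sum_mul_sum]
      refine Finset.sum_congr rfl fun d _ => Finset.sum_congr rfl fun e _ => ?_
      rw [pow_add]; ring
    rw [add_sq, sq, h1]; ring
  have E1 : ∫ x, ((∑ d : Fin D, z d * f x ^ ((d : ℕ) + 1)) + c) ^ 2 ∂muK K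
      = (∑ d : Fin D, ∑ e : Fin D, (z d * z e) * q d e)
        + ((2 * c) * (∑ d : Fin D, z d * m d) + c ^ 2) := by
    simp only [hpt]
    have hQint : Integrable
        (fun x => ∑ d : Fin D, ∑ e : Fin D, (z d * z e) * f x ^ (((d : ℕ) + 1) + ((e : ℕ) + 1)))
        (muK K) := integrable_finset_sum _ fun d _ =>
          integrable_finset_sum _ fun e _ => (hPint _).const_mul _
    have hRint : Integrable
        (fun x => 2 * c * (∑ d : Fin D, z d * f x ^ ((d : ℕ) + 1)) + c ^ 2) (muK K) :=
      (hSint.const_mul _).add (integrable_const _)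
    have hS2int : Integrable
        (fun x => 2 * c * (∑ d : Fin D, z d * f x ^ ((d : ℕ) + 1))) (muK K) :=
      hSint.const_mul _
    rw [integral_add hQint hRint,
      integral_add hS2int (integrable_const _),
      integral_finset_sum _ (fun d _ => integrable_finset_sum _ fun e _ => (hPint _).const_mul _),
      integral_const_mul]
    have hSv : ∫ x, (∑ d : Fin D, z d * f x ^ ((d : ℕ) + 1)) ∂muK K
        = ∑ d : Fin D, z d * m d := by
      rw [integral_finset_sum _ (fun d _ => (hPint _).const_mul _)]
      simp [integral_const_mul]
      rfl
    rw [hSv, integral_const]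
    simp only [measure_univ, probReal_univ, ENNReal.toReal_one, one_smul, smul_eq_mul, one_mul]
    congr 1
    refine Finset.sum_congr rfl fun d _ => ?_
    rw [integral_finset_sum _ (fun e _ => (hPint _).const_mul _)]
    exact Finset.sum_congr rfl fun e _ => integral_const_mul _ _
  rw [E1, E2]
  have hT2 : ((∑ d : Fin D, z d * m d) : ℝ) * (∑ e : Fin D, z e * m e)
      = ∑ d : Fin D, ∑ e : Fin D, (z d * z e) * (m d * m e) := by
    rw [Finset.sum_mul_sum]
    exact Finset.sum_congr rfl fun d _ => Finset.sum_congr rfl fun e _ => by ring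
  have hR : (∑ d : Fin D, ∑ e : Fin D, z d * z e * (q d e - m d * m e))
      = (∑ d : Fin D, ∑ e : Fin D, (z d * z e) * q d e)
        - ∑ d : Fin D, ∑ e : Fin D, (z d * z e) * (m d * m e) := by
    simp only [mul_sub, Finset.sum_sub_distrib]
  rw [hR, show ((∑ d : Fin D, z d * m d) + c) ^ 2
      = (∑ d : Fin D, z d * m d) * (∑ e : Fin D, z e * m e)
        + 2 * c * (∑ d : Fin D, z d * m d) + c ^ 2 by ring, hT2]
  ring

end core

section core2

variable {K D : ℕ} {f : (Fin K → ℝ) → ℝ}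

lemma fv_eq (hf : Measurable f) (hf01 : ∀ x, f x ∈ Set.Icc (0:ℝ) 1)
    (z : Fin D → ℝ) (c : ℝ) (k : Fin K) :
    firstVar K (fun x => (∑ d : Fin D, z d * f x ^ ((d : ℕ) + 1)) + c) k
      = ∑ d : Fin D, ∑ e : Fin D, z d * z e *
          ((∫ t in Set.Icc (0 : ℝ) 1,
              marg K (fun x => f x ^ ((d : ℕ) + 1)) k t *
                marg K (fun x => f x ^ ((e : ℕ) + 1)) k t) -
            (∫ x in box K, f x ^ ((d : ℕ) + 1)) * (∫ x in box K, f x ^ ((e : ℕ) + 1))) := by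
  have hb := restrict_box' K
  have hnu : (volume : Measure ℝ).restrict (Set.Icc (0 : ℝ) 1) = nuI := rfl
  simp only [firstVar, marg, hb, hnu]
  have hPm : ∀ n : ℕ, Measurable fun x : Fin K → ℝ => f x ^ n := fun n => hf.pow_const n
  set m : Fin D → ℝ := fun d => ∫ x, f x ^ ((d : ℕ) + 1) ∂muK K with hm
  set G : Fin D → ℝ → ℝ :=
    fun d t => ∫ x, f (Function.update x k t) ^ ((d : ℕ) + 1) ∂muK K with hG
  have hupd : ∀ t : ℝ, Measurable fun x : Fin K → ℝ => Function.update x k t :=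
    fun t => (meas_Phi k).comp (measurable_const.prodMk measurable_id)
  have hgint : ∀ (n : ℕ) (t : ℝ),
      Integrable (fun x => f (Function.update x k t) ^ n) (muK K) :=
    fun n t => integrable_bdd ((hPm n).comp (hupd t)) (fun x => hPb hf01 n _)
  have hGm : ∀ d : Fin D, Measurable (G d) :=
    fun d => marg_measurable k (hPm ((d : ℕ) + 1))
  have hGb : ∀ (d : Fin D) (t : ℝ), |G d t| ≤ 1 :=
    fun d t => integral_abs_le (fun x => hPb hf01 _ _)
  have hmb : ∀ d : Fin D, |m d| ≤ 1 := fun d => integral_abs_le (hPb hf01 _)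
  have hGnu : ∀ d : Fin D, ∫ t, G d t ∂nuI = m d :=
    fun d => integral_marg_eq k (hPm _) (hPb hf01 _)
  have hGint : ∀ d : Fin D, Integrable (G d) nuI :=
    fun d => integrable_bdd (hGm d) (hGb d)
  have hmargh : ∀ t : ℝ,
      ∫ x, ((∑ d : Fin D, z d * f (Function.update x k t) ^ ((d : ℕ) + 1)) + c) ∂muK K
        = (∑ d : Fin D, z d * G d t) + c := by
    intro t
    rw [integral_add (integrable_finset_sum _ fun d _ => (hgint _ t).const_mul _)
      (integrable_const c), integral_finset_sum _ (fun d _ => (hgint _ t).const_mul _)]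
    simp [integral_const_mul]
    rfl
  have E2 : ∫ x, ((∑ d : Fin D, z d * f x ^ ((d : ℕ) + 1)) + c) ∂muK K
      = (∑ d : Fin D, z d * m d) + c := int_h hf hf01 z c
  have hpt : ∀ t : ℝ,
      ((∑ d : Fin D, z d * G d t) + c - ((∑ d : Fin D, z d * m d) + c)) ^ 2
        = ∑ d : Fin D, ∑ e : Fin D, (z d * z e) * ((G d t - m d) * (G e t - m e)) := by
    intro t
    have h0 : (∑ d : Fin D, z d * G d t) + c - ((∑ d : Fin D, z d * m d) + c)
        = ∑ d : Fin D, z d * (G d t - m d) := by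
      simp only [mul_sub, Finset.sum_sub_distrib]; ring
    rw [h0, sq, Finset.sum_mul_sum]
    exact Finset.sum_congr rfl fun d _ => Finset.sum_congr rfl fun e _ => by ring
  have hfun : (fun t : ℝ =>
      ((∫ x, ((∑ d : Fin D, z d * f (Function.update x k t) ^ ((d : ℕ) + 1)) + c) ∂muK K)
        - ∫ x, ((∑ d : Fin D, z d * f x ^ ((d : ℕ) + 1)) + c) ∂muK K) ^ 2)
      = fun t : ℝ => ∑ d : Fin D, ∑ e : Fin D,
          (z d * z e) * ((G d t - m d) * (G e t - m e)) := by
    funext t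
    rw [hmargh t, E2]
    exact hpt t
  rw [hfun]
  have hsub_int : ∀ d e : Fin D,
      Integrable (fun t => (G d t - m d) * (G e t - m e)) nuI := by
    intro d e
    refine integrable_bdd (((hGm d).sub measurable_const).mul ((hGm e).sub measurable_const))
      (C := 4) (fun t => ?_)
    rw [abs_mul]
    have h1 : |G d t - m d| ≤ 2 := by
      have := hGb d t; have := hmb d
      rw [abs_le] at *
      constructor <;> [linarith [this.1]; linarith [this.2]]
    have h2 : |G e t - m e| ≤ 2 := by
      have := hGb e t; have := hmb e
      rw [abs_le] at *
      constructor <;> [linarith [this.1]; linarith [this.2]]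
    calc |G d t - m d| * |G e t - m e| ≤ 2 * 2 :=
          mul_le_mul h1 h2 (abs_nonneg _) (by norm_num)
      _ = 4 := by norm_num
  rw [integral_finset_sum _ (fun d _ => integrable_finset_sum _ fun e _ =>
    (hsub_int d e).const_mul _)]
  refine Finset.sum_congr rfl fun d _ => ?_
  rw [integral_finset_sum _ (fun e _ => (hsub_int d e).const_mul _)]
  refine Finset.sum_congr rfl fun e _ => ?_
  rw [integral_const_mul]
  congr 1
  -- ∫ (G d - m d)(G e - m e) dνI = ∫ G d * G e dνI - m d * m e
  have hGGint : Integrable (fun t => G d t * G e t) nuI := by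
    refine integrable_bdd ((hGm d).mul (hGm e)) (C := 1) (fun t => ?_)
    rw [abs_mul]
    calc |G d t| * |G e t| ≤ 1 * 1 :=
        mul_le_mul (hGb d t) (hGb e t) (abs_nonneg _) zero_le_one
      _ = 1 := by norm_num
  have hpt2 : (fun t : ℝ => (G d t - m d) * (G e t - m e))
      = fun t => G d t * G e t - (m d * G e t + (m e * G d t - m d * m e)) := by
    funext t; ring
  have hI3 : Integrable (fun t => m e * G d t - m d * m e) nuI :=
    ((hGint d).const_mul _).sub (integrable_const _)
  have hI2 : Integrable (fun t => m d * G e t + (m e * G d t - m d * m e)) nuI :=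
    ((hGint e).const_mul _).add hI3
  rw [hpt2, integral_sub hGGint hI2,
    integral_add ((hGint e).const_mul _) hI3,
    integral_sub ((hGint d).const_mul _) (integrable_const _),
    integral_const_mul, integral_const_mul, integral_const, hGnu d, hGnu e]
  simp only [measure_univ, probReal_univ, ENNReal.toReal_one, one_smul, smul_eq_mul]
  ring

end core2

lemma quad_form {D : ℕ} (M : Matrix (Fin D) (Fin D) ℝ) (z : Fin D → ℝ) :
    z ⬝ᵥ M.mulVec z = ∑ d : Fin D, ∑ e : Fin D, z d * z e * M d e := by
  simp only [dotProduct, Matrix.mulVec, Finset.mul_sum]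
  exact Finset.sum_congr rfl fun d _ => Finset.sum_congr rfl fun e _ => by ring


/-- There exists a skewing polynomial `g ∈ V(z,c)` (i.e. `z ∈ Z \ {0}`, `c ∈ ℝ`)
making `φ_{z,c} = g ∘ f` of effective superposition dimension `1` at level `ε`
if and only if the maximum of the cone-constrained Rayleigh quotient
`zᵀAz / zᵀBz` over `Z \ {0}` is at least `1 − ε`. -/
theorem effective_superposition_dim_one_iff_rayleigh (K D : ℕ)
    (hK : 1 ≤ K) (hD : 1 ≤ D)
    (f : (Fin K → ℝ) → ℝ) (hf : Measurable f)
    (hf01 : ∀ x, f x ∈ Set.Icc (0 : ℝ) 1)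
    (ε : ℝ) (hε : ε ∈ Set.Ioo (0 : ℝ) 1)
    (B : Matrix (Fin D) (Fin D) ℝ)
    (hB : ∀ i j : Fin D, B i j =
      (∫ x in box K, f x ^ (((i : ℕ) + 1) + ((j : ℕ) + 1))) -
        (∫ x in box K, f x ^ ((i : ℕ) + 1)) * (∫ x in box K, f x ^ ((j : ℕ) + 1)))
    (Ak : Fin K → Matrix (Fin D) (Fin D) ℝ)
    (hAk : ∀ (k : Fin K) (i j : Fin D), Ak k i j =
      (∫ t in Set.Icc (0 : ℝ) 1,
          marg K (fun x => f x ^ ((i : ℕ) + 1)) k t *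
            marg K (fun x => f x ^ ((j : ℕ) + 1)) k t) -
        (∫ x in box K, f x ^ ((i : ℕ) + 1)) * (∫ x in box K, f x ^ ((j : ℕ) + 1)))
    (A : Matrix (Fin D) (Fin D) ℝ) (hA : A = ∑ k : Fin K, Ak k)
    (hBpd : B.PosDef)
    (hne : ∃ z : Fin D → ℝ, z ≠ 0 ∧ ∀ i : Fin D, 0 ≤ (Mmat D).mulVec z i) :
    ((∃ (z : Fin D → ℝ) (c : ℝ), z ≠ 0 ∧ (∀ i : Fin D, 0 ≤ (Mmat D).mulVec z i) ∧
        (1 - ε) * totalVar K (fun x => (∑ d : Fin D, z d * f x ^ ((d : ℕ) + 1)) + c)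
          ≤ ∑ k : Fin K,
              firstVar K (fun x => (∑ d : Fin D, z d * f x ^ ((d : ℕ) + 1)) + c) k) ↔
      (∃ z : Fin D → ℝ, z ≠ 0 ∧ (∀ i : Fin D, 0 ≤ (Mmat D).mulVec z i) ∧
        1 - ε ≤ (z ⬝ᵥ A.mulVec z) / (z ⬝ᵥ B.mulVec z))) := by
  have hTV : ∀ (z : Fin D → ℝ) (c : ℝ),
      totalVar K (fun x => (∑ d : Fin D, z d * f x ^ ((d : ℕ) + 1)) + c)
        = z ⬝ᵥ B.mulVec z := by
    intro z c
    rw [tv_eq hf hf01 z c, quad_form B z]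
    exact Finset.sum_congr rfl fun d _ => Finset.sum_congr rfl fun e _ => by rw [hB d e]
  have hFV : ∀ (z : Fin D → ℝ) (c : ℝ),
      (∑ k : Fin K,
          firstVar K (fun x => (∑ d : Fin D, z d * f x ^ ((d : ℕ) + 1)) + c) k)
        = z ⬝ᵥ A.mulVec z := by
    intro z c
    have hk : ∀ k : Fin K,
        firstVar K (fun x => (∑ d : Fin D, z d * f x ^ ((d : ℕ) + 1)) + c) k
          = z ⬝ᵥ (Ak k).mulVec z := by
      intro k
      rw [fv_eq hf hf01 z c k, quad_form (Ak k) z]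
      exact Finset.sum_congr rfl fun d _ => Finset.sum_congr rfl fun e _ => by rw [hAk k d e]
    rw [Finset.sum_congr rfl (fun k _ => hk k), hA]
    simp only [quad_form, Matrix.sum_apply, Finset.mul_sum]
    rw [Finset.sum_comm]
    exact Finset.sum_congr rfl fun d _ => Finset.sum_comm
  constructor
  · rintro ⟨z, c, hz, hZ, hineq⟩
    refine ⟨z, hz, hZ, ?_⟩
    rw [hTV z c, hFV z c] at hineq
    have hpos : 0 < z ⬝ᵥ B.mulVec z := by simpa using hBpd.re_dotProduct_pos hz
    exact (le_div_iff₀ hpos).2 hineq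
  · rintro ⟨z, hz, hZ, hineq⟩
    have hpos : 0 < z ⬝ᵥ B.mulVec z := by simpa using hBpd.re_dotProduct_pos hz
    exact ⟨z, 0, hz, hZ, by rw [hTV z 0, hFV z 0]; exact (le_div_iff₀ hpos).1 hineq⟩
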